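/- Let n ≥ 3, k ≥ 0, and let S be a maximal independent non-reversible set of critical pairs in G_n^k. Then S contains a strict alternating cycle of size exactly 3. -/

import Mathlib

namespace CrownPaper

/-- Indices of the crown `S_n^k` live in `ZMod (n+k)`. The minimal element `a_i` is
incomparable to the maximal element `b_j` iff `(j - i) mod (n+k) ≤ k`. -/
def Incomp (n k : ℕ) (i j : ZMod (n + k)) : Prop := (j - i).val ≤ k

/-- `a_i < b_j` in the crown `S_n^k` iff `(j - i) mod (n+k) > k`. -/
def CompLt (n k : ℕ) (i j : ZMod (n + k)) : Prop := k < (j - i).val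

/-- A pair `(a_i, b_j)` is recorded as its pair of indices. -/
abbrev Pair (n k : ℕ) := ZMod (n + k) × ZMod (n + k)

/-- `(a_i, b_j)` is an incomparable (critical) pair. -/
def IsIncPair (n k : ℕ) (p : Pair n k) : Prop := Incomp n k p.1 p.2

/-- Adjacency in the graph `G_n^k` of critical pairs: `(a_i,b_j)` and `(a_p,b_q)` are
adjacent iff `a_i < b_q` and `a_p < b_j` in `S_n^k`. -/
def Adj (n k : ℕ) (p q : Pair n k) : Prop :=
  CompLt n k p.1 q.2 ∧ CompLt n k q.1 p.2

/-- An independent set of critical pairs in `G_n^k`. -/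
def Indep (n k : ℕ) (S : Set (Pair n k)) : Prop :=
  (∀ p ∈ S, IsIncPair n k p) ∧ ∀ p ∈ S, ∀ q ∈ S, ¬ Adj n k p q

/-- A set of pairs is reversible when some linear extension of the crown (encoded as an
injective map into `ℕ` on the disjoint union `A ⊕ B` preserving all strict comparabilities
`a_i < b_j`) puts `a` above `b` for every pair `(a,b)` of the set. -/
def Reversible (n k : ℕ) (S : Set (Pair n k)) : Prop :=
  ∃ f : (ZMod (n + k)) ⊕ (ZMod (n + k)) → ℕ,
    Function.Injective f ∧
    (∀ i j : ZMod (n + k), CompLt n k i j → f (Sum.inl i) < f (Sum.inr j)) ∧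
    ∀ p ∈ S, f (Sum.inr p.2) < f (Sum.inl p.1)

/-! ### Auxiliary definitions -/

/-- The arc relation of the digraph on critical pairs: `p → q` iff `a_{p.1} < b_{q.2}`
(we also record that the target lies in `S`). -/
def DArc (n k : ℕ) (S : Set (Pair n k)) (p q : Pair n k) : Prop :=
  q ∈ S ∧ CompLt n k p.1 q.2

/-- The base relation encoding the constraints a reversing linear extension must satisfy. -/
def R0 (n k : ℕ) (S : Set (Pair n k)) :
    (ZMod (n + k)) ⊕ (ZMod (n + k)) → (ZMod (n + k)) ⊕ (ZMod (n + k)) → Prop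
  | .inl i, .inr j => CompLt n k i j
  | .inr j, .inl i => (i, j) ∈ S
  | _, _ => False

/-- Invariant used to turn an `R0`-cycle into a `DArc`-cycle. -/
def QQ (n k : ℕ) (S : Set (Pair n k)) :
    (ZMod (n + k)) ⊕ (ZMod (n + k)) → (ZMod (n + k)) ⊕ (ZMod (n + k)) → Prop
  | .inl i, .inl i' => ∃ j', (i', j') ∈ S ∧
      ∀ j, Relation.TransGen (DArc n k S) (i, j) (i', j')
  | .inl i, .inr j' => CompLt n k i j' ∨
      ∃ q, q ∈ S ∧ (∀ j, Relation.TransGen (DArc n k S) (i, j) q) ∧ CompLt n k q.1 j'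
  | .inr j0, .inl i' => ∃ i1, (i1, j0) ∈ S ∧
      ∃ j', (i', j') ∈ S ∧ Relation.ReflTransGen (DArc n k S) (i1, j0) (i', j')
  | .inr j0, .inr j' => ∃ i1, (i1, j0) ∈ S ∧
      ∃ q, Relation.ReflTransGen (DArc n k S) (i1, j0) q ∧ CompLt n k q.1 j'

lemma key (n k : ℕ) (S : Set (Pair n k)) :
    ∀ x y, Relation.TransGen (R0 n k S) x y → QQ n k S x y := by
  intro x y h
  induction h with
  | single h' =>
    rename_i b
    match x, b, h' with
    | .inl i, .inl i', h' => exact h'.elim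
    | .inl i, .inr j', h' => exact Or.inl h'
    | .inr j0, .inl i', h' => exact ⟨i', h', j0, h', Relation.ReflTransGen.refl⟩
    | .inr j0, .inr j', h' => exact h'.elim
  | tail hxy h' ih =>
    rename_i b c
    match b, c, h' with
    | .inl a, .inl a', h' => exact h'.elim
    | .inr bb, .inr bb', h' => exact h'.elim
    | .inl a, .inr bb, h' =>
      match x, ih with
      | .inl i, ih =>
        obtain ⟨j', hj'S, hch⟩ := ih
        exact Or.inr ⟨(a, j'), hj'S, hch, h'⟩
      | .inr j0, ih =>
        obtain ⟨i1, h1, j', hj', hch⟩ := ih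
        exact ⟨i1, h1, (a, j'), hch, h'⟩
    | .inr bb, .inl a, h' =>
      match x, ih with
      | .inl i, ih =>
        refine ⟨bb, h', fun j => ?_⟩
        rcases ih with h0 | ⟨q, hqS, hch, hq1⟩
        · exact Relation.TransGen.single ⟨h', h0⟩
        · exact (hch j).tail ⟨h', hq1⟩
      | .inr j0, ih =>
        obtain ⟨i1, h1, q, hch, hq1⟩ := ih
        exact ⟨i1, h1, bb, h', hch.tail ⟨h', hq1⟩⟩

lemma noR0cycle (n k : ℕ) (S : Set (Pair n k))
    (h : ¬ ∃ p : Pair n k, Relation.TransGen (DArc n k S) p p) :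
    ∀ x, ¬ Relation.TransGen (R0 n k S) x x := by
  rintro (i | j0) hx
  · obtain ⟨j', hj'S, hch⟩ := key n k S _ _ hx
    exact h ⟨(i, j'), hch j'⟩
  · obtain ⟨i1, h1, q, hch, hq1⟩ := key n k S _ _ hx
    exact h ⟨(i1, j0), Relation.TransGen.tail' hch ⟨h1, hq1⟩⟩

lemma reversible_of_acyclic (n k : ℕ) (S : Set (Pair n k)) (hnk : n + k ≠ 0)
    (h : ∀ x, ¬ Relation.TransGen (R0 n k S) x x) : Reversible n k S := by
  classical
  haveI : NeZero (n + k) := ⟨hnk⟩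
  set X := (ZMod (n + k)) ⊕ (ZMod (n + k)) with hX
  let r : X → X → Prop := fun a b => Relation.TransGen (R0 n k S) a b ∨ a = b
  haveI : IsPartialOrder X r :=
    { refl := fun a => Or.inr rfl
      trans := by
        rintro a b c (hab | rfl) (hbc | rfl)
        · exact Or.inl (hab.trans hbc)
        · exact Or.inl hab
        · exact Or.inl hbc
        · exact Or.inr rfl
      antisymm := by
        rintro a b (hab | rfl) hba'
        · rcases hba' with hba | rfl
          · exact absurd (hab.trans hba) (h a)
          · rfl
        · rfl }
  obtain ⟨s, hs, hrs⟩ := extend_partialOrder r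
  haveI := hs
  let f : X → ℕ := fun x => (Finset.univ.filter fun y => s y x ∧ y ≠ x).card
  have mono : ∀ a b : X, s a b → a ≠ b → f a < f b := by
    intro a b hab hne
    have hsub : (Finset.univ.filter fun y => s y a ∧ y ≠ a) ⊆
        (Finset.univ.filter fun y => s y b ∧ y ≠ b) := by
      intro y hy
      rw [Finset.mem_filter] at hy ⊢
      refine ⟨Finset.mem_univ _, IsTrans.trans _ _ _ hy.2.1 hab, ?_⟩
      rintro rfl
      exact hne (Std.Antisymm.antisymm _ _ hab hy.2.1)
    have hamem : a ∈ (Finset.univ.filter fun y => s y b ∧ y ≠ b) :=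
      Finset.mem_filter.mpr ⟨Finset.mem_univ _, hab, hne⟩
    have hanot : a ∉ (Finset.univ.filter fun y => s y a ∧ y ≠ a) := by
      simp [Finset.mem_filter]
    exact Finset.card_lt_card (Finset.ssubset_def.mpr ⟨hsub, fun hc => hanot (hc hamem)⟩)
  have hstep : ∀ a b : X, R0 n k S a b → f a < f b := by
    intro a b hab
    have hne : a ≠ b := by
      rintro rfl
      exact h a (Relation.TransGen.single hab)
    exact mono a b (hrs _ _ (Or.inl (Relation.TransGen.single hab))) hne
  refine ⟨f, ?_, ?_, ?_⟩
  · intro a b hf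
    by_contra hne
    rcases Std.Total.total (r := s) a b with hab | hba
    · exact absurd hf (Nat.ne_of_lt (mono a b hab hne))
    · exact absurd hf.symm (Nat.ne_of_lt (mono b a hba (Ne.symm hne)))
  · intro i j hij
    exact hstep _ _ hij
  · intro p hp
    exact hstep (Sum.inr p.2) (Sum.inl p.1) (by show (p.1, p.2) ∈ S; simpa using hp)

lemma exists_chain {α : Type*} (r : α → α → Prop) :
    ∀ a b, Relation.TransGen r a b → ∃ l : List α, List.Chain r a (l ++ [b]) := by
  intro a b h
  induction h using Relation.TransGen.head_induction_on with
  | single h' => exact ⟨[], List.Chain.cons h' List.Chain.nil⟩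
  | @head a' c h' hTG ih =>
    obtain ⟨l, hl⟩ := ih
    exact ⟨c :: l, List.Chain.cons h' hl⟩

lemma chain_mem (n k : ℕ) (S : Set (Pair n k)) :
    ∀ (a : Pair n k) (l : List (Pair n k)), List.Chain (DArc n k S) a l → ∀ x ∈ l, x ∈ S := by
  intro a l
  induction l generalizing a with
  | nil => intro _ x hx; exact absurd hx List.not_mem_nil
  | cons b t ih =>
    intro hch x hx
    rw [List.Chain, List.chain_cons] at hch
    rcases List.mem_cons.mp hx with rfl | hx'
    · exact hch.1.1
    · exact ih b hch.2 x hx'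

lemma not_compLt_of_incomp {n k : ℕ} {i j : ZMod (n + k)} (h : Incomp n k i j) :
    ¬ CompLt n k i j := not_lt.mpr h

/-- Any directed triangle inside `S` yields the strict alternating cycle of size 3. -/
lemma triangle (n k : ℕ) (S : Set (Pair n k)) (hI : Indep n k S)
    (p q r : Pair n k) (hp : p ∈ S) (hq : q ∈ S) (hr : r ∈ S)
    (h1 : CompLt n k p.1 q.2) (h2 : CompLt n k q.1 r.2) (h3 : CompLt n k r.1 p.2) :
    ∃ x y : ZMod 3 → ZMod (n + k),
      (∀ α : ZMod 3, (x α, y α) ∈ S) ∧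
      ∀ α β : ZMod 3, (CompLt n k (x α) (y β) ↔ β = α - 1) := by
  have notP : ¬ CompLt n k p.1 p.2 := not_compLt_of_incomp (hI.1 p hp)
  have notQ : ¬ CompLt n k q.1 q.2 := not_compLt_of_incomp (hI.1 q hq)
  have notR : ¬ CompLt n k r.1 r.2 := not_compLt_of_incomp (hI.1 r hr)
  have n1 : ¬ CompLt n k q.1 p.2 := fun hc => hI.2 p hp q hq ⟨h1, hc⟩
  have n2 : ¬ CompLt n k r.1 q.2 := fun hc => hI.2 q hq r hr ⟨h2, hc⟩
  have n3 : ¬ CompLt n k p.1 r.2 := fun hc => hI.2 r hr p hp ⟨h3, hc⟩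
  have hz3 : ∀ γ : ZMod 3, γ = 0 ∨ γ = 1 ∨ γ = 2 := by decide
  have d10 : ¬((1 : ZMod 3) = 0) := by decide
  have d11 : ((1 : ZMod 3) = 1) := rfl
  have d20 : ¬((2 : ZMod 3) = 0) := by decide
  have d21 : ¬((2 : ZMod 3) = 1) := by decide
  refine ⟨fun α => if α = 0 then p.1 else if α = 1 then r.1 else q.1,
          fun α => if α = 0 then p.2 else if α = 1 then r.2 else q.2, ?_, ?_⟩
  · intro α
    rcases hz3 α with rfl | rfl | rfl <;> beta_reduce
    · rw [if_pos rfl, if_pos rfl]; exact hp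
    · rw [if_neg d10, if_pos d11, if_neg d10, if_pos d11]; exact hr
    · rw [if_neg d20, if_neg d21, if_neg d20, if_neg d21]; exact hq
  · intro α β
    rcases hz3 α with rfl | rfl | rfl <;> rcases hz3 β with rfl | rfl | rfl <;> beta_reduce
    · rw [if_pos rfl, if_pos rfl]; exact iff_of_false notP (by decide)
    · rw [if_pos rfl, if_neg d10, if_pos d11]; exact iff_of_false n3 (by decide)
    · rw [if_pos rfl, if_neg d20, if_neg d21]; exact iff_of_true h1 (by decide)
    · rw [if_neg d10, if_pos d11, if_pos rfl]; exact iff_of_true h3 (by decide)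
    · rw [if_neg d10, if_pos d11, if_neg d10, if_pos d11]
      exact iff_of_false notR (by decide)
    · rw [if_neg d10, if_pos d11, if_neg d20, if_neg d21]
      exact iff_of_false n2 (by decide)
    · rw [if_neg d20, if_neg d21, if_pos rfl]; exact iff_of_false n1 (by decide)
    · rw [if_neg d20, if_neg d21, if_neg d10, if_pos d11]
      exact iff_of_true h2 (by decide)
    · rw [if_neg d20, if_neg d21, if_neg d20, if_neg d21]
      exact iff_of_false notQ (by decide)

/-- Main induction: a cycle of pairs of `S` yields a strict alternating cycle of size 3. -/
lemma cyc_ind (n k : ℕ) (S : Set (Pair n k)) (hI : Indep n k S)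
    (hmax : ∀ S' : Set (Pair n k), S ⊆ S' → Indep n k S' → S' = S) :
    ∀ (N : ℕ) (a : Pair n k) (l : List (Pair n k)), l.length ≤ N → a ∈ S →
      (∀ x ∈ l, x ∈ S) →
      List.Chain (fun p q : Pair n k => CompLt n k p.1 q.2) a (l ++ [a]) →
      ∃ x y : ZMod 3 → ZMod (n + k),
        (∀ α : ZMod 3, (x α, y α) ∈ S) ∧
        ∀ α β : ZMod 3, (CompLt n k (x α) (y β) ↔ β = α - 1) := by
  intro N
  induction N with
  | zero =>
    intro a l hlen haS hlS hch
    have hl : l = [] := List.length_eq_zero_iff.mp (Nat.le_zero.mp hlen)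
    subst hl
    rw [List.nil_append, List.Chain, List.chain_cons] at hch
    exact absurd hch.1 (not_compLt_of_incomp (hI.1 a haS))
  | succ N ihN =>
    intro a l hlen haS hlS hch
    match l with
    | [] =>
      rw [List.nil_append, List.Chain, List.chain_cons] at hch
      exact absurd hch.1 (not_compLt_of_incomp (hI.1 a haS))
    | [b] =>
      rw [List.cons_append, List.nil_append, List.Chain, List.chain_cons, List.chain_cons] at hch
      exact absurd (⟨hch.1, hch.2.1⟩ : Adj n k a b)
        (hI.2 a haS b (hlS b (by simp)))
    | [b, c] =>
      rw [List.cons_append, List.cons_append, List.nil_append, List.Chain, List.chain_cons,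
        List.chain_cons, List.chain_cons] at hch
      exact triangle n k S hI a b c haS (hlS b (by simp)) (hlS c (by simp))
        hch.1 hch.2.1 hch.2.2.1
    | b :: c :: d :: tl =>
      have hb : b ∈ S := hlS b (by simp)
      have hc : c ∈ S := hlS c (by simp)
      have hd : d ∈ S := hlS d (by simp)
      rw [List.cons_append, List.cons_append, List.cons_append, List.Chain, List.chain_cons,
        List.chain_cons, List.chain_cons] at hch
      obtain ⟨hab, hbc, hcd, hchd⟩ := hch
      by_cases hno : ∀ u ∈ S, ¬ Adj n k ((c.1, b.2) : Pair n k) u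
      · -- the pair (c.1, b.2) can be added to S; by maximality it is in S; shorten the cycle
        have hwinc : Incomp n k c.1 b.2 := by
          have := hI.2 b hb c hc
          rw [Adj] at this
          have : ¬ CompLt n k c.1 b.2 := fun hcon => this ⟨hbc, hcon⟩
          exact not_lt.mp this
        have hindep : Indep n k (insert ((c.1, b.2) : Pair n k) S) := by
          constructor
          · intro x hx
            rcases Set.mem_insert_iff.mp hx with rfl | hxS
            · exact hwinc
            · exact hI.1 x hxS
          · intro x hx y hy
            rcases Set.mem_insert_iff.mp hx with rfl | hxS <;>
              rcases Set.mem_insert_iff.mp hy with rfl | hyS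
            · rintro ⟨hc1, _⟩
              exact not_compLt_of_incomp hwinc hc1
            · exact hno y hyS
            · rintro ⟨hc1, hc2⟩
              exact hno x hxS ⟨hc2, hc1⟩
            · exact hI.2 x hxS y hyS
        have hwS : ((c.1, b.2) : Pair n k) ∈ S := by
          have := hmax _ (Set.subset_insert _ _) hindep
          rw [← this]
          exact Set.mem_insert _ _
        refine ihN a ((c.1, b.2) :: d :: tl) ?_ haS ?_ ?_
        · have := hlen
          simp only [List.length_cons] at this ⊢
          omega
        · intro x hx
          simp only [List.mem_cons] at hx
          rcases hx with rfl | rfl | hx'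
          · exact hwS
          · exact hd
          · exact hlS x (by simp [hx'])
        · rw [List.cons_append, List.cons_append, List.Chain, List.chain_cons, List.chain_cons]
          exact ⟨hab, hcd, hchd⟩
      · -- some pair of S is adjacent to (c.1, b.2): direct triangle b → c → u → b
        push_neg at hno
        obtain ⟨u, huS, hu1, hu2⟩ := hno
        exact triangle n k S hI b c u hb hc huS hbc hu1 hu2

/-- a maximal independent non-reversible set of critical pairs in `G_n^k`
contains a strict alternating cycle of size exactly `3`. -/
theorem maximal_INR_contains_sac3 (n k : ℕ) (hn : 3 ≤ n) (S : Set (Pair n k))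
    (hI : Indep n k S) (hNR : ¬ Reversible n k S)
    (hmax : ∀ S' : Set (Pair n k), S ⊆ S' → Indep n k S' → S' = S) :
    ∃ x y : ZMod 3 → ZMod (n + k),
      (∀ α : ZMod 3, (x α, y α) ∈ S) ∧
      ∀ α β : ZMod 3, (CompLt n k (x α) (y β) ↔ β = α - 1) := by
  by_cases hcyc : ∃ p : Pair n k, Relation.TransGen (DArc n k S) p p
  · obtain ⟨p, hp⟩ := hcyc
    obtain ⟨l, hl⟩ := exists_chain (DArc n k S) p p hp
    have hmem : ∀ x ∈ l ++ [p], x ∈ S := chain_mem n k S p (l ++ [p]) hl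
    have hpS : p ∈ S := hmem p (by simp)
    have hlS : ∀ x ∈ l, x ∈ S := fun x hx => hmem x (by simp [hx])
    have hch : List.Chain (fun p q : Pair n k => CompLt n k p.1 q.2) p (l ++ [p]) :=
      List.Chain.imp (fun _ _ h => h.2) hl
    exact cyc_ind n k S hI hmax l.length p l le_rfl hpS hlS hch
  · exact absurd (reversible_of_acyclic n k S (by omega) (noR0cycle n k S hcyc)) hNR

end CrownPaper
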